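/- Let D be an open subset of {(ρ,z) ∈ ℝ² : ρ > 0}, let K and ε be real numbers, and let ψ, γ : D → ℝ be twice continuously differentiable functions satisfying on D the equations γ_ρ = ρ(ψ_ρ² − ψ_z²), γ_z = 2ρψ_ρψ_z, and −2(ψ_ρρ + ψ_ρ/ρ + ψ_zz) = K ε e^{2γ−2ψ}. Then K ε ψ_z = 0 at every point of D; in particular, if Kε ≠ 0 then ψ_z vanishes identically on D. -/

import Mathlib

/-- Partial derivative with respect to the first coordinate `ρ`. -/
noncomputable def dρ (f : ℝ × ℝ → ℝ) (p : ℝ × ℝ) : ℝ := fderiv ℝ f p (1, 0)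

/-- Partial derivative with respect to the second coordinate `z`. -/
noncomputable def dz (f : ℝ × ℝ → ℝ) (p : ℝ × ℝ) : ℝ := fderiv ℝ f p (0, 1)

private lemma fderiv_diffAt {f : ℝ × ℝ → ℝ} {q : ℝ × ℝ} (hf : ContDiffAt ℝ 2 f q) :
    DifferentiableAt ℝ (fderiv ℝ f) q :=
  (hf.fderiv_right one_add_one_eq_two.le).differentiableAt one_ne_zero

private lemma eval_diff {f : ℝ × ℝ → ℝ} {q : ℝ × ℝ} (hf : ContDiffAt ℝ 2 f q) (v : ℝ × ℝ) :
    DifferentiableAt ℝ (fun p => fderiv ℝ f p v) q :=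
  (fderiv_diffAt hf).clm_apply (differentiableAt_const v)

private lemma eval_fderiv {f : ℝ × ℝ → ℝ} {q : ℝ × ℝ} (hf : ContDiffAt ℝ 2 f q) (v w : ℝ × ℝ) :
    fderiv ℝ (fun p => fderiv ℝ f p v) q w = fderiv ℝ (fderiv ℝ f) q w v := by
  rw [fderiv_clm_apply (fderiv_diffAt hf) (differentiableAt_const v)]
  simp

private lemma mixed {f : ℝ × ℝ → ℝ} {q : ℝ × ℝ} (hf : ContDiffAt ℝ 2 f q) :
    fderiv ℝ (fun p => fderiv ℝ f p (1, 0)) q (0, 1)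
      = fderiv ℝ (fun p => fderiv ℝ f p (0, 1)) q (1, 0) := by
  rw [eval_fderiv hf, eval_fderiv hf]
  exact (hf.isSymmSndFDerivAt (by simp [minSmoothness_of_isRCLikeNormedField])) _ _

theorem integrability_obstruction
    (D : Set (ℝ × ℝ)) (hDhalf : D ⊆ {p : ℝ × ℝ | 0 < p.1}) (hDo : IsOpen D)
    (K ε : ℝ) (ψ γ : ℝ × ℝ → ℝ)
    (hψ : ContDiffOn ℝ 2 ψ D) (hγ : ContDiffOn ℝ 2 γ D)
    (hγρ : ∀ q ∈ D, dρ γ q = q.1 * ((dρ ψ q) ^ 2 - (dz ψ q) ^ 2))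
    (hγz : ∀ q ∈ D, dz γ q = 2 * q.1 * dρ ψ q * dz ψ q)
    (heq : ∀ q ∈ D, -2 * (dρ (dρ ψ) q + dρ ψ q / q.1 + dz (dz ψ) q)
      = K * ε * Real.exp (2 * γ q - 2 * ψ q)) :
    (∀ q ∈ D, K * ε * dz ψ q = 0) ∧ (K * ε ≠ 0 → ∀ q ∈ D, dz ψ q = 0) := by
  have main : ∀ q ∈ D, K * ε * dz ψ q = 0 := by
    intro q hq
    have hqn : D ∈ nhds q := hDo.mem_nhds hq
    have hψq : ContDiffAt ℝ 2 ψ q := hψ.contDiffAt hqn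
    have hγq : ContDiffAt ℝ 2 γ q := hγ.contDiffAt hqn
    have hρ0 : 0 < q.1 := hDhalf hq
    -- differentiability of the partials of ψ
    have hg : DifferentiableAt ℝ (dρ ψ) q := eval_diff hψq (1, 0)
    have hh : DifferentiableAt ℝ (dz ψ) q := eval_diff hψq (0, 1)
    set P := dρ ψ q with hP
    set Z := dz ψ q with hZ
    set g' := fderiv ℝ (dρ ψ) q with hg'
    set h' := fderiv ℝ (dz ψ) q with hh'
    -- the right-hand sides, as functions
    have e1 : dρ γ =ᶠ[nhds q] fun p => p.1 * (dρ ψ p * dρ ψ p - dz ψ p * dz ψ p) := by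
      filter_upwards [hqn] with p hp
      rw [hγρ p hp]; ring
    have e2 : dz γ =ᶠ[nhds q] fun p => 2 * p.1 * dρ ψ p * dz ψ p := by
      filter_upwards [hqn] with p hp
      exact hγz p hp
    -- derivative of RHS1
    have H1 : HasFDerivAt (fun p : ℝ × ℝ => p.1 * (dρ ψ p * dρ ψ p - dz ψ p * dz ψ p))
        (q.1 • ((P • g' + P • g') - (Z • h' + Z • h'))
          + (P * P - Z * Z) • ContinuousLinearMap.fst ℝ ℝ ℝ) q :=
      hasFDerivAt_fst.mul ((hg.hasFDerivAt.mul hg.hasFDerivAt).sub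
        (hh.hasFDerivAt.mul hh.hasFDerivAt))
    -- derivative of RHS2
    have H2 : HasFDerivAt (fun p : ℝ × ℝ => 2 * p.1 * dρ ψ p * dz ψ p)
        (((2 * q.1) * P) • h' + Z • ((2 * q.1) • g'
          + P • ((2 : ℝ) • (ContinuousLinearMap.fst ℝ ℝ ℝ)))) q := by
      have h0 : HasFDerivAt (fun p : ℝ × ℝ => 2 * p.1)
          ((2 : ℝ) • (ContinuousLinearMap.fst ℝ ℝ ℝ)) q :=
        (hasFDerivAt_fst (p := q) (𝕜 := ℝ)).const_mul (2 : ℝ)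
      exact (h0.mul hg.hasFDerivAt).mul hh.hasFDerivAt
    -- mixed partials of γ coincide
    have key : fderiv ℝ (dρ γ) q (0, 1) = fderiv ℝ (dz γ) q (1, 0) := by
      have := mixed hγq
      exact this
    have v1 : fderiv ℝ (dρ γ) q (0, 1)
        = q.1 * (P * g' (0, 1) + P * g' (0, 1) - (Z * h' (0, 1) + Z * h' (0, 1))) := by
      rw [e1.fderiv_eq, H1.fderiv]
      simp [ContinuousLinearMap.fst]
    have v2 : fderiv ℝ (dz γ) q (1, 0)
        = (2 * q.1) * P * h' (1, 0) + Z * ((2 * q.1) * g' (1, 0) + P * 2) := by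
      rw [e2.fderiv_eq, H2.fderiv]
      simp [ContinuousLinearMap.fst]
      ring
    -- symmetry of second derivative of ψ : g' (0,1) = h' (1,0)
    have hsymψ : g' (0, 1) = h' (1, 0) := by
      have := mixed hψq
      exact this
    set A := g' (1, 0) with hA
    set B := g' (0, 1) with hB
    set C := h' (0, 1) with hC
    have eqn : q.1 * (P * B + P * B - (Z * C + Z * C))
        = (2 * q.1) * P * B + Z * ((2 * q.1) * A + P * 2) := by
      have e := key
      rw [v1, v2, ← hsymψ] at e
      exact e
    have hne : q.1 ≠ 0 := ne_of_gt hρ0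
    have h1 : Z * (q.1 * A + P + q.1 * C) = 0 := by
      linear_combination (-1/2 : ℝ) * eqn
    have hZ0 : Z * (A + P / q.1 + C) = 0 := by
      have h2 : Z * (A + P / q.1 + C) * q.1 = Z * (q.1 * A + P + q.1 * C) := by
        have hd : P / q.1 * q.1 = P := div_mul_cancel₀ P hne
        linear_combination Z * hd
      have h3 : Z * (A + P / q.1 + C) * q.1 = 0 := by rw [h2, h1]
      exact (mul_eq_zero.mp h3).resolve_right hne
    have heqq := heq q hq
    have hAC : dρ (dρ ψ) q = A := by rw [hA, hg']; rfl
    have hCC : dz (dz ψ) q = C := by rw [hC, hh']; rfl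
    have hE : Real.exp (2 * γ q - 2 * ψ q) ≠ 0 := Real.exp_ne_zero _
    have hKZ : K * ε * Real.exp (2 * γ q - 2 * ψ q) * Z = 0 := by
      rw [← heqq, hAC, hCC]
      linear_combination (-2 : ℝ) * hZ0
    rcases mul_eq_zero.mp hKZ with h | h
    · have hK0 : K * ε = 0 := (mul_eq_zero.mp h).resolve_right hE
      rw [hK0, zero_mul]
    · rw [h, mul_zero]
  refine ⟨main, fun hKε q hq => ?_⟩
  exact (mul_eq_zero.mp (main q hq)).resolve_left hKε
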